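/- arXiv:0808.3516 — 5 statements merged into one kernel-verified Lean document; each statement's English description precedes it below -/
import Mathlib

section
/- Let d ≥ 3, u ∈ ℝ, q ∈ (0,1). Define the (d+1)×(d+1) matrix M(u) with entries M(u)_{jr} = e^{-ju} q^{r-j} C(r,j) (1 - e^{-u})^{r-j} for 0 ≤ j ≤ r ≤ d and 0 otherwise. Then M(v_1 + v_2) = M(v_1) M(v_2) for all v_1, v_2 ∈ ℝ; in particular M(-v) = M(v)^{-1}. -/
open Finset in
lemma key_sum (v₁ v₂ q : ℝ) (j r : ℕ) (h : j ≤ r) :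
    ∑ k ∈ Finset.Icc j r,
      (Real.exp (-(j:ℝ) * v₁) * q ^ (k - j) * (Nat.choose k j) *
        (1 - Real.exp (-v₁)) ^ (k - j)) *
      (Real.exp (-(k:ℝ) * v₂) * q ^ (r - k) * (Nat.choose r k) *
        (1 - Real.exp (-v₂)) ^ (r - k))
    = Real.exp (-(j:ℝ) * (v₁ + v₂)) * q ^ (r - j) * (Nat.choose r j) *
        (1 - Real.exp (-(v₁ + v₂))) ^ (r - j) := by
  set n := r - j with hn
  have hr : r = j + n := by omega
  rw [← Finset.Ico_add_one_right_eq_Icc, Finset.sum_Ico_eq_sum_range]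
  have hrange : r + 1 - j = n + 1 := by omega
  rw [hrange]
  have hx : (1 - Real.exp (-(v₁ + v₂))) =
      ((1 - Real.exp (-v₁)) * Real.exp (-v₂)) + (1 - Real.exp (-v₂)) := by
    rw [neg_add, Real.exp_add]; ring
  rw [hx, add_pow]
  simp only [Finset.mul_sum]
  apply Finset.sum_congr rfl
  intro m hm
  rw [Finset.mem_range] at hm
  have hmn : m ≤ n := by omega
  -- simplify indices
  have h1 : j + m - j = m := by omega
  have h2 : r - (j + m) = n - m := by omega
  rw [h1, h2]
  -- choose identity
  have hc : (Nat.choose (j + m) j) * (Nat.choose r (j + m)) =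
      (Nat.choose r j) * (Nat.choose n m) := by
    have := Nat.choose_mul (n := r) (k := j + m) (s := j) (by omega)
    rw [mul_comm] at this
    rw [this, h1, ← hn]
  have hcR : ((Nat.choose (j + m) j : ℝ)) * ((Nat.choose r (j + m) : ℝ)) =
      ((Nat.choose r j : ℝ)) * ((Nat.choose n m : ℝ)) := by
    exact_mod_cast congrArg (Nat.cast (R := ℝ)) hc
  have hq : q ^ m * q ^ (n - m) = q ^ n := by
    rw [← pow_add]; congr 1; omega
  have he1 : Real.exp (-((j : ℝ) + m) * v₂) =
      Real.exp (-(j:ℝ) * v₂) * Real.exp (-v₂) ^ m := by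
    rw [← Real.exp_nat_mul, ← Real.exp_add]; ring_nf
  have he2 : Real.exp (-(j:ℝ) * (v₁ + v₂)) =
      Real.exp (-(j:ℝ) * v₁) * Real.exp (-(j:ℝ) * v₂) := by
    rw [← Real.exp_add]; ring_nf
  have hcast : ((j + m : ℕ) : ℝ) = (j : ℝ) + m := by push_cast; ring
  rw [hcast, he1, he2]
  calc Real.exp (-(j:ℝ) * v₁) * q ^ m * ((Nat.choose (j + m) j : ℝ)) *
        (1 - Real.exp (-v₁)) ^ m *
      (Real.exp (-(j:ℝ) * v₂) * Real.exp (-v₂) ^ m * q ^ (n - m) *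
        ((Nat.choose r (j + m) : ℝ)) * (1 - Real.exp (-v₂)) ^ (n - m))
      = (((Nat.choose (j + m) j : ℝ)) * ((Nat.choose r (j + m) : ℝ))) *
        ((q ^ m * q ^ (n - m)) *
        (Real.exp (-(j:ℝ) * v₁) * Real.exp (-(j:ℝ) * v₂) *
          ((1 - Real.exp (-v₁)) ^ m * Real.exp (-v₂) ^ m *
            (1 - Real.exp (-v₂)) ^ (n - m)))) := by ring
    _ = _ := by
        rw [hcR, hq, mul_pow]
        push_cast
        ring

theorem stmt_5 (d : ℕ) (hd : 3 ≤ d) (q : ℝ) (hq0 : 0 < q) (hq1 : q < 1)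
    (M : ℝ → Matrix (Fin (d + 1)) (Fin (d + 1)) ℝ)
    (hM : ∀ u, ∀ j r : Fin (d + 1), M u j r =
      if (j : ℕ) ≤ (r : ℕ) then
        Real.exp (-(j : ℝ) * u) * q ^ ((r : ℕ) - (j : ℕ)) *
          (Nat.choose (r : ℕ) (j : ℕ)) * (1 - Real.exp (-u)) ^ ((r : ℕ) - (j : ℕ))
      else 0) :
    (∀ v₁ v₂ : ℝ, M (v₁ + v₂) = M v₁ * M v₂) ∧ (∀ v : ℝ, M (-v) = (M v)⁻¹) := by
  have hmul : ∀ v₁ v₂ : ℝ, M (v₁ + v₂) = M v₁ * M v₂ := by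
    intro v₁ v₂
    ext j r
    rw [Matrix.mul_apply]
    simp only [hM]
    have hsum : ∀ k : Fin (d + 1),
        (if (j : ℕ) ≤ (k : ℕ) then
          Real.exp (-(j : ℝ) * v₁) * q ^ ((k : ℕ) - (j : ℕ)) *
            (Nat.choose (k : ℕ) (j : ℕ)) * (1 - Real.exp (-v₁)) ^ ((k : ℕ) - (j : ℕ))
        else 0) *
        (if (k : ℕ) ≤ (r : ℕ) then
          Real.exp (-(k : ℝ) * v₂) * q ^ ((r : ℕ) - (k : ℕ)) *
            (Nat.choose (r : ℕ) (k : ℕ)) * (1 - Real.exp (-v₂)) ^ ((r : ℕ) - (k : ℕ))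
        else 0) =
        if (k : ℕ) ∈ Finset.Icc (j : ℕ) (r : ℕ) then
          (Real.exp (-(j : ℝ) * v₁) * q ^ ((k : ℕ) - (j : ℕ)) *
            (Nat.choose (k : ℕ) (j : ℕ)) * (1 - Real.exp (-v₁)) ^ ((k : ℕ) - (j : ℕ))) *
          (Real.exp (-(k : ℝ) * v₂) * q ^ ((r : ℕ) - (k : ℕ)) *
            (Nat.choose (r : ℕ) (k : ℕ)) * (1 - Real.exp (-v₂)) ^ ((r : ℕ) - (k : ℕ)))
        else 0 := by
      intro k
      by_cases h1 : (j : ℕ) ≤ (k : ℕ) <;> by_cases h2 : (k : ℕ) ≤ (r : ℕ) <;>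
        simp [Finset.mem_Icc, h1, h2]
    rw [Finset.sum_congr rfl (fun k _ => hsum k)]
    rw [Fin.sum_univ_eq_sum_range (fun k =>
        if k ∈ Finset.Icc (j : ℕ) (r : ℕ) then
          (Real.exp (-(j : ℝ) * v₁) * q ^ (k - (j : ℕ)) *
            (Nat.choose k (j : ℕ)) * (1 - Real.exp (-v₁)) ^ (k - (j : ℕ))) *
          (Real.exp (-(k : ℝ) * v₂) * q ^ ((r : ℕ) - k) *
            (Nat.choose (r : ℕ) k) * (1 - Real.exp (-v₂)) ^ ((r : ℕ) - k))
        else 0)]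
    rw [Finset.sum_ite_mem]
    have hinter : Finset.range (d + 1) ∩ Finset.Icc (j : ℕ) (r : ℕ) =
        Finset.Icc (j : ℕ) (r : ℕ) := by
      apply Finset.inter_eq_right.mpr
      intro k hk
      rw [Finset.mem_Icc] at hk
      rw [Finset.mem_range]
      exact lt_of_le_of_lt hk.2 r.isLt
    rw [hinter]
    by_cases hjr : (j : ℕ) ≤ (r : ℕ)
    · rw [if_pos hjr, key_sum v₁ v₂ q (j : ℕ) (r : ℕ) hjr]
    · rw [if_neg hjr]
      rw [Finset.Icc_eq_empty (by omega), Finset.sum_empty]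
  have hone : M 0 = 1 := by
    ext j r
    rw [hM, Matrix.one_apply]
    by_cases h : j = r
    · subst h
      simp
    · have h' : (j : ℕ) ≠ (r : ℕ) := fun hc => h (Fin.ext hc)
      rw [if_neg h]
      by_cases hle : (j : ℕ) ≤ (r : ℕ)
      · rw [if_pos hle]
        have : (r : ℕ) - (j : ℕ) ≠ 0 := by omega
        simp [zero_pow this]
      · rw [if_neg hle]
  refine ⟨hmul, fun v => ?_⟩
  have h1 : M v * M (-v) = 1 := by
    rw [← hmul, add_neg_cancel, hone]
  exact (Matrix.inv_eq_right_inv h1).symm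
end

section
/- Let d ≥ 3 and p ∈ (0,1), q = 1-p, with p(d-1) > 1. Let π ∈ (0,1) be the root of π = (pπ + q)^{d-1}. Then 1 - π is of order p - p* exactly as p ↓ p* = 1/(d-1); that is, there exist constants c_1, c_2 > 0 (depending only on d) and ε > 0 such that for all p with 0 < p - p* < ε, c_1(p - p*) ≤ 1 - π ≤ c_2(p - p*). -/
set_option maxHeartbeats 800000 in
theorem stmt_10 (d : ℕ) (hd : 3 ≤ d) :
    ∃ c₁ c₂ ε : ℝ, 0 < c₁ ∧ 0 < c₂ ∧ 0 < ε ∧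
      ∀ p : ℝ, 1 / ((d : ℝ) - 1) < p → p - 1 / ((d : ℝ) - 1) < ε → p < 1 →
        ∀ x : ℝ, x ∈ Set.Ioo (0 : ℝ) 1 → x = (p * x + (1 - p)) ^ (d - 1) →
          c₁ * (p - 1 / ((d : ℝ) - 1)) ≤ 1 - x ∧
          1 - x ≤ c₂ * (p - 1 / ((d : ℝ) - 1)) := by
  have hd3 : (3:ℝ) ≤ (d:ℝ) := by exact_mod_cast hd
  set M : ℝ := (d:ℝ) - 1 with hM
  have hM2 : (2:ℝ) ≤ M := by rw [hM]; linarith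
  have hM0 : 0 < M := by linarith
  refine ⟨1/M, M^3, 1, by positivity, by positivity, one_pos, ?_⟩
  intro p hp1 _ hp3 x hx hfix
  obtain ⟨hx0, hx1⟩ := hx
  have hp0 : 0 < p := lt_trans (by positivity) hp1
  have hA : 0 < 1 - x := by linarith
  set v : ℝ := p * x + (1 - p) with hv
  have hvm : v ^ (d-1) = x := hfix.symm
  have h1v : 1 - v = p * (1 - x) := by rw [hv]; ring
  have hB0 : 0 < 1 - v := by rw [h1v]; positivity
  have hv0 : 0 ≤ v := by nlinarith
  have hv1 : v ≤ 1 := by linarith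
  have hMm : ((d-1 : ℕ) : ℝ) = M := by
    rw [Nat.cast_sub (by omega), hM]; norm_num
  have hMp : 1 < M * p := by
    rw [div_lt_iff₀ hM0] at hp1; linarith [hp1]
  set S : ℝ := ∑ k ∈ Finset.range (d-1), (1 - v^k) with hSdef
  have hS1 : 1 - v ≤ S := by
    have h1mem : 1 ∈ Finset.range (d-1) := Finset.mem_range.mpr (by omega)
    calc 1 - v = 1 - v^1 := by rw [pow_one]
    _ ≤ S := Finset.single_le_sum (f := fun k => 1 - v^k)
        (fun k _ => sub_nonneg.mpr (pow_le_one₀ hv0 hv1)) h1mem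
  have hS2 : S ≤ M * (M * (1 - v)) := by
    have h : S ≤ ∑ k ∈ Finset.range (d-1), M * (1 - v) := by
      apply Finset.sum_le_sum
      intro k hk
      have hkd : (k:ℝ) ≤ M := by
        have : (k:ℝ) ≤ ((d-1:ℕ):ℝ) := by
          exact_mod_cast le_of_lt (Finset.mem_range.mp hk)
        linarith [hMm ▸ this]
      have hber : 1 + (k:ℝ) * (v - 1) ≤ v ^ k := by
        have h' := one_add_mul_le_pow (a := v - 1) (by linarith) k
        have hv' : 1 + (v - 1) = v := by ring
        rwa [hv'] at h'
      nlinarith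
    calc S ≤ ∑ k ∈ Finset.range (d-1), M * (1 - v) := h
    _ = ((d-1:ℕ):ℝ) * (M * (1 - v)) := by
        rw [Finset.sum_const, Finset.card_range, nsmul_eq_mul]
    _ = M * (M * (1 - v)) := by rw [hMm]
  have hgeom : (1 - v) * ∑ k ∈ Finset.range (d-1), v^k = 1 - v^(d-1) := by
    linear_combination -geom_sum_mul v (d-1)
  have hN : M * (1 - v) - (1 - x) = (1 - v) * S := by
    have hsplit : S = ((d-1:ℕ):ℝ) - ∑ k ∈ Finset.range (d-1), v^k := by
      rw [hSdef, Finset.sum_sub_distrib, Finset.sum_const, Finset.card_range,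
        nsmul_eq_mul, mul_one]
    rw [hsplit, hMm, ← hvm]
    linear_combination hgeom
  have hBA : 1 - v ≤ 1 - x := by nlinarith
  have e1 : (1-x) * (M * p - 1) = (1 - v) * S := by
    rw [← hN]
    linear_combination (-M) * h1v
  constructor
  · -- (1/M) * (p - 1/M) ≤ 1 - x
    have h1 : (1 - v) * S ≤ (1 - v) * (M * (M * (1 - v))) :=
      mul_le_mul_of_nonneg_left hS2 hB0.le
    have e2 : M * M * ((1-v) * (1-v)) ≤ M * M * ((1-x) * (1-x)) :=
      mul_le_mul_of_nonneg_left (mul_le_mul hBA hBA hB0.le hA.le)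
        (by positivity)
    have key1 : (1-x) * (M * p - 1) ≤ M^2 * (1-x)^2 := by nlinarith [e1, h1, e2]
    have h2 : M * p - 1 ≤ M^2 * (1-x) := by nlinarith [key1, hA, sq_nonneg (1-x)]
    have hrw : (1/M) * (p - 1/M) = (M * p - 1) / M^2 := by
      field_simp
    rw [hrw, div_le_iff₀ (by positivity : (0:ℝ) < M^2)]
    linarith
  · -- 1 - x ≤ M^3 * (p - 1/M)
    have h1 : (1 - v) * (1 - v) ≤ (1 - v) * S :=
      mul_le_mul_of_nonneg_left hS1 hB0.le
    have h1' : M * M * ((1 - v) * (1 - v)) ≤ M * M * ((1 - v) * S) :=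
      mul_le_mul_of_nonneg_left h1 (by positivity)
    have hMB : 1 - x ≤ M * (1 - v) := by nlinarith [h1v, hMp, hA]
    have e2 : (1-x) * (1-x) ≤ (M * (1-v)) * (M * (1-v)) :=
      mul_le_mul hMB hMB hA.le (by positivity)
    have key2 : (1-x)^2 ≤ M^2 * ((1-x) * (M * p - 1)) := by
      nlinarith [e1, h1', e2]
    have h2 : 1 - x ≤ M^2 * (M * p - 1) := by nlinarith [key2, hA, mul_pos hA hA]
    have hrw : M^3 * (p - 1/M) = M^2 * (M * p - 1) := by
      field_simp
    rw [hrw]; exact h2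
end

section
/- Let d ≥ 3, p ∈ (0,1), q = 1-p with p(d-1) > 1, m ∈ {0,1,2}, n large. Let f(y) = y - (py+q)^{d-1}(1 - m/n) on [0,1], let ŷ ∈ (0,1) be its smaller root and π the root of y = (py+q)^{d-1} in (0,1). Then |ŷ - π| = O(n^{-1/2}) as n → ∞, uniformly over p with p - p* bounded. -/
lemma quad_aux (j : ℕ) (a b : ℝ) (ha : 0 ≤ a) (hb : 0 ≤ b) :
    b ^ j * (a - b) ^ 2 ≤ a ^ (j + 2) - b ^ (j + 2) - ((j : ℝ) + 2) * b ^ (j + 1) * (a - b) := by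
  induction j with
  | zero => norm_num; nlinarith [sq_nonneg (a - b)]
  | succ i ih =>
      have h1 := mul_le_mul_of_nonneg_left ih ha
      have h2 : 0 ≤ b ^ i * (a - b) ^ 2 * (((i : ℝ) + 1) * b + a) := by positivity
      push_cast
      simp only [pow_add, pow_one] at *
      nlinarith [h1, h2]

set_option maxHeartbeats 2000000 in
theorem stmt_14 (d : ℕ) (hd : 3 ≤ d) (B : ℝ) (hB : 0 < B) :
    ∃ C : ℝ, 0 < C ∧
      ∀ n : ℕ, 1 ≤ n → ∀ m : ℕ, m ≤ 2 →
        ∀ p : ℝ, 1 / ((d : ℝ) - 1) < p → p - 1 / ((d : ℝ) - 1) ≤ B → p < 1 →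
          ∀ yhat ∈ Set.Ioo (0 : ℝ) 1,
            yhat = (p * yhat + (1 - p)) ^ (d - 1) * (1 - (m : ℝ) / n) →
            ∀ x ∈ Set.Ioo (0 : ℝ) 1,
              x = (p * x + (1 - p)) ^ (d - 1) →
              |yhat - x| ≤ C / Real.sqrt n := by
  obtain ⟨j, rfl⟩ : ∃ j, d = j + 3 := ⟨d - 3, by omega⟩
  set S : ℝ := 2 * ((j : ℝ) + 2) * Real.sqrt ((j : ℝ) + 2) with hS_def
  have hS0 : 0 ≤ S := by positivity
  have hSsq : S ^ 2 = 4 * ((j : ℝ) + 2) ^ 3 := by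
    have h := Real.sq_sqrt (show (0:ℝ) ≤ (j : ℝ) + 2 by positivity)
    rw [hS_def]; nlinarith [h]
  clear_value S
  refine ⟨4 + S, by positivity, ?_⟩
  intro n hn m hm p hp1 hpB hp2 yhat hymem hyhat x hxmem hx
  obtain ⟨hy0, hy1⟩ := hymem
  obtain ⟨hx0, hx1⟩ := hxmem
  have hde : j + 3 - 1 = j + 2 := rfl
  rw [hde] at hyhat hx
  have hn0 : (0 : ℝ) < n := by exact_mod_cast hn
  have hp0 : 0 < p := by
    have h2 : (0:ℝ) < 1 / ((j : ℝ) + 3 - 1) := by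
      rw [show ((j:ℝ) + 3 - 1) = (j:ℝ) + 2 by ring]; positivity
    push_cast at hp1; linarith
  have hpstar : 1 < ((j : ℝ) + 2) * p := by
    push_cast at hp1
    rw [show ((j:ℝ) + 3 - 1) = (j:ℝ) + 2 by ring,
      div_lt_iff₀ (by positivity : (0:ℝ) < (j:ℝ) + 2)] at hp1
    linarith
  set a : ℝ := p * yhat + (1 - p) with ha_def
  set b : ℝ := p * x + (1 - p) with hb_def
  have ha0 : 0 < a := by
    have h := mul_pos hp0 hy0; simp only [ha_def]; linarith only [h, hp2]
  have ha1 : a < 1 := by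
    have h := (mul_lt_mul_iff_right₀ hp0).mpr hy1
    simp only [ha_def]; linarith only [h]
  have hb0 : 0 < b := by
    have h := mul_pos hp0 hx0; simp only [hb_def]; linarith only [h, hp2]
  have hb1 : b < 1 := by
    have h := (mul_lt_mul_iff_right₀ hp0).mpr hx1
    simp only [hb_def]; linarith only [h]
  have h1b : (0:ℝ) < 1 - b := by linarith
  have hb_eq : p * b ^ (j + 2) = b - (1 - p) := by
    rw [← hx]; simp only [hb_def]; ring
  have hE : a - (1 - p) - p * a ^ (j + 2) = -(p * a ^ (j + 2) * ((m : ℝ) / n)) := by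
    linear_combination p * hyhat + ha_def
  clear_value a b
  have haj0 : 0 < a ^ (j + 2) := pow_pos ha0 _
  have haj1 : a ^ (j + 2) ≤ 1 := pow_le_one₀ ha0.le ha1.le
  have hE0 : 0 ≤ p * a ^ (j + 2) * ((m : ℝ) / n) := by positivity
  have hm2 : (m : ℝ) ≤ 2 := by exact_mod_cast hm
  have hE2 : p * a ^ (j + 2) * ((m : ℝ) / n) ≤ 2 * p / n := by
    rw [show p * a ^ (j + 2) * ((m : ℝ) / n) = p * a ^ (j + 2) * (m : ℝ) / n by ring]
    rw [div_le_div_iff_of_pos_right hn0]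
    have h1 : a ^ (j + 2) * (m : ℝ) ≤ 1 * 2 :=
      mul_le_mul haj1 hm2 (Nat.cast_nonneg m) zero_le_one
    have h2 : p * (a ^ (j + 2) * (m : ℝ)) ≤ p * (1 * 2) :=
      mul_le_mul_of_nonneg_left h1 hp0.le
    linarith only [h2]
  -- Step 1: D := 1 - (j+2) p b^(j+1) ≥ 0
  have hq1p := mul_le_mul_of_nonneg_left (quad_aux j 1 b zero_le_one hb0.le) hp0.le
  have key1 : p * (1 ^ (j + 2) - b ^ (j + 2) - ((j:ℝ) + 2) * b ^ (j + 1) * (1 - b))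
      = (1 - ((j:ℝ) + 2) * p * b ^ (j + 1)) * (1 - b) := by
    linear_combination -hb_eq
  rw [key1] at hq1p
  have hL0 : 0 ≤ p * (b ^ j * (1 - b) ^ 2) := by positivity
  have hD0 : 0 ≤ 1 - ((j:ℝ) + 2) * p * b ^ (j + 1) :=
    (mul_nonneg_iff_of_pos_right h1b).mp (le_trans hL0 hq1p)
  -- Step 2: a ≤ b
  have hab : a ≤ b := by
    by_contra hab'
    push_neg at hab'
    set L : ℝ := (1 - a) / (1 - b) with hL_def
    set M : ℝ := (a - b) / (1 - b) with hM_def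
    have hL : 0 ≤ L := div_nonneg (by linarith) h1b.le
    have hM : 0 ≤ M := div_nonneg (by linarith) h1b.le
    have hLM : L + M = 1 := by rw [hL_def, hM_def]; field_simp; ring
    have hcvx := (convexOn_pow (j + 2)).2 (Set.mem_Ici.2 hb0.le)
      (Set.mem_Ici.2 (zero_le_one (α := ℝ))) hL hM hLM
    simp only [smul_eq_mul, mul_one, one_pow] at hcvx
    have hcomb : L * b + M = a := by
      rw [hL_def, hM_def]; field_simp; ring
    clear_value L M
    rw [hcomb] at hcvx
    have h5 : p * a ^ (j + 2) ≤ a - (1 - p) := by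
      have h3 := mul_le_mul_of_nonneg_left hcvx hp0.le
      have h4 : p * (L * b ^ (j + 2) + M) = a - (1 - p) := by
        linear_combination L * hb_eq + hcomb + (p - 1) * hLM
      linarith only [h3, h4]
    have hEzero : p * a ^ (j + 2) * ((m : ℝ) / n) = 0 := by linarith only [hE, h5, hE0]
    have heq : p * a ^ (j + 2) = a - (1 - p) := by linear_combination -hE + hEzero
    -- derivative at a is positive
    have hqap := mul_le_mul_of_nonneg_left (quad_aux j 1 a zero_le_one ha0.le) hp0.le
    have key2 : p * (1 ^ (j + 2) - a ^ (j + 2) - ((j:ℝ) + 2) * a ^ (j + 1) * (1 - a))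
        = (1 - ((j:ℝ) + 2) * p * a ^ (j + 1)) * (1 - a) := by
      linear_combination -heq
    rw [key2] at hqap
    have h1a : (0:ℝ) < 1 - a := by linarith
    have hLa0 : 0 < p * (a ^ j * (1 - a) ^ 2) :=
      mul_pos hp0 (mul_pos (pow_pos ha0 j) (pow_pos h1a 2))
    have hDa0 : 0 < 1 - ((j:ℝ) + 2) * p * a ^ (j + 1) :=
      (mul_pos_iff_of_pos_right h1a).mp (lt_of_lt_of_le hLa0 hqap)
    -- quad centered at a evaluated at b gives contradiction
    have hqbp := mul_le_mul_of_nonneg_left (quad_aux j b a hb0.le ha0.le) hp0.le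
    have key3 : p * (b ^ (j + 2) - a ^ (j + 2) - ((j:ℝ) + 2) * a ^ (j + 1) * (b - a))
        = (b - a) * (1 - ((j:ℝ) + 2) * p * a ^ (j + 1)) := by
      linear_combination hb_eq - heq
    rw [key3] at hqbp
    have hba2 : 0 < (b - a) ^ 2 := pow_two_pos_of_ne_zero (sub_neg.mpr hab').ne
    have hlhs : 0 < p * (a ^ j * (b - a) ^ 2) :=
      mul_pos hp0 (mul_pos (pow_pos ha0 j) hba2)
    have hprod : 0 < (a - b) * (1 - ((j:ℝ) + 2) * p * a ^ (j + 1)) :=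
      mul_pos (by linarith) hDa0
    linarith only [hqbp, hlhs, hprod]
  -- Master inequality
  have hqm := mul_le_mul_of_nonneg_left (quad_aux j a b ha0.le hb0.le) hp0.le
  have keym : p * (a ^ (j + 2) - b ^ (j + 2) - ((j:ℝ) + 2) * b ^ (j + 1) * (a - b))
      = p * a ^ (j + 2) * ((m : ℝ) / n)
        - (b - a) * (1 - ((j:ℝ) + 2) * p * b ^ (j + 1)) := by
    linear_combination -hb_eq - hE
  rw [keym] at hqm
  set E : ℝ := p * a ^ (j + 2) * ((m : ℝ) / n) with hE_def
  clear_value E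
  -- hqm : p*(b^j*(a-b)^2) ≤ E' where E' = -E - (b-a)*D ; i.e. p b^j (b-a)^2 + (b-a) D ≤ E ≤ 2p/n
  have hxy : p * (x - yhat) = b - a := by simp only [ha_def, hb_def]; ring
  have hxy0 : 0 ≤ x - yhat :=
    nonneg_of_mul_nonneg_right (by rw [hxy]; linarith) hp0
  have habs : |yhat - x| = x - yhat := by rw [abs_sub_comm, abs_of_nonneg hxy0]
  rw [habs]
  have hsn : 0 < Real.sqrt n := Real.sqrt_pos.2 hn0
  have hn1 : (1:ℝ) ≤ n := by exact_mod_cast hn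
  have hsnn : Real.sqrt n ≤ n := by
    have hnn : (n:ℝ) ≤ (n:ℝ)^2 := by
      calc (n:ℝ) = 1 * n := (one_mul _).symm
      _ ≤ (n:ℝ) * n := mul_le_mul_of_nonneg_right hn1 hn0.le
      _ = (n:ℝ)^2 := by ring
    calc Real.sqrt n ≤ Real.sqrt ((n:ℝ)^2) := Real.sqrt_le_sqrt hnn
    _ = n := Real.sqrt_sq hn0.le
  rcases le_or_gt (1/2 : ℝ) (1 - ((j:ℝ) + 2) * p * b ^ (j + 1)) with hD | hD
  · -- Case A : derivative at b at least 1/2, gap ≤ 4/n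
    have hgap : b - a ≤ 4 * p / n := by
      have h6 : (b - a) * (1/2) ≤ (b - a) * (1 - ((j:ℝ) + 2) * p * b ^ (j + 1)) :=
        mul_le_mul_of_nonneg_left hD (by linarith)
      have h7 : 0 ≤ p * (b ^ j * (a - b) ^ 2) := by positivity
      have half : b - a ≤ 2 * E := by linarith only [hqm, h6, h7]
      have h2E : 2 * E ≤ 4 * p / n := by
        have h := mul_le_mul_of_nonneg_left hE2 (by norm_num : (0:ℝ) ≤ 2)
        rw [show 2 * (2 * p / (n:ℝ)) = 4 * p / n by ring] at h
        exact h
      exact half.trans h2E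
    have h8 : x - yhat ≤ 4 / n := by
      have : p * (x - yhat) ≤ p * (4 / n) := by rw [hxy]; rw [show p * (4/n) = 4*p/n by ring]; exact hgap
      exact le_of_mul_le_mul_left this hp0
    calc x - yhat ≤ 4 / n := h8
    _ ≤ 4 / Real.sqrt n := by
        apply div_le_div_of_nonneg_left (by norm_num) hsn hsnn
    _ ≤ (4 + S) / Real.sqrt n := by
        rw [div_le_div_iff_of_pos_right hsn]; linarith only [hS0]
  · -- Case B : curvature regime
    have hbj : b ^ (j + 1) ≤ b ^ j := pow_le_pow_of_le_one hb0.le hb1.le (by omega)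
    have h15 : 1 < p * b ^ (j + 1) * (2 * ((j:ℝ) + 2)) := by linarith only [hD]
    have h16 : 1 < p * b ^ j * (2 * ((j:ℝ) + 2)) := by
      have h14 := mul_le_mul_of_nonneg_left hbj hp0.le
      have h14' := mul_le_mul_of_nonneg_right h14
        (show (0:ℝ) ≤ 2 * ((j:ℝ) + 2) by positivity)
      linarith only [h15, h14']
    have h18 : 1 < p ^ 2 * b ^ j * (2 * ((j:ℝ) + 2) ^ 2) := by
      have hX0 : (0:ℝ) < p * b ^ j * (2 * ((j:ℝ) + 2)) := lt_trans one_pos h16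
      have h17 := mul_lt_mul' h16.le hpstar zero_le_one hX0
      calc (1:ℝ) = 1 * 1 := by norm_num
      _ < p * b ^ j * (2 * ((j:ℝ) + 2)) * (((j:ℝ) + 2) * p) := h17
      _ = p ^ 2 * b ^ j * (2 * ((j:ℝ) + 2) ^ 2) := by ring
    have hmaster2 : p * (b ^ j * (p * (x - yhat)) ^ 2) ≤ 2 * p / n := by
      have hrw : p * (b ^ j * (p * (x - yhat)) ^ 2) = p * (b ^ j * (a - b) ^ 2) := by
        rw [hxy]; ring
      rw [hrw]
      have h11 : 0 ≤ (b - a) * (1 - ((j:ℝ) + 2) * p * b ^ (j + 1)) :=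
        mul_nonneg (by linarith) hD0
      linarith only [hqm, hE2, h11]
    have h13 : b ^ j * p ^ 2 * (x - yhat) ^ 2 ≤ 2 / n := by
      apply le_of_mul_le_mul_left ?_ hp0
      calc p * (b ^ j * p ^ 2 * (x - yhat) ^ 2)
          = p * (b ^ j * (p * (x - yhat)) ^ 2) := by ring
      _ ≤ 2 * p / n := hmaster2
      _ = p * (2 / n) := by ring
    have ht2 : (x - yhat) ^ 2 * (n:ℝ) ≤ 4 * ((j:ℝ) + 2) ^ 2 := by
      have h20 : (n:ℝ) * (b ^ j * p ^ 2 * (x - yhat) ^ 2) ≤ 2 := by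
        have h := mul_le_mul_of_nonneg_left h13 hn0.le
        rw [show (n:ℝ) * (2 / n) = 2 by field_simp] at h
        exact h
      have h21 := mul_le_mul_of_nonneg_left h18.le
        (mul_nonneg (sq_nonneg (x - yhat)) hn0.le)
      have h22 := mul_le_mul_of_nonneg_right h20
        (show (0:ℝ) ≤ 2 * ((j:ℝ) + 2) ^ 2 by positivity)
      rw [mul_one] at h21
      linarith only [h21, h22]
    rw [le_div_iff₀ hsn]
    have h23 : ((x - yhat) * Real.sqrt n) ^ 2 ≤ (2 * ((j:ℝ) + 2)) ^ 2 := by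
      rw [mul_pow, Real.sq_sqrt hn0.le]
      calc (x - yhat) ^ 2 * (n:ℝ) ≤ 4 * ((j:ℝ) + 2) ^ 2 := ht2
      _ = (2 * ((j:ℝ) + 2)) ^ 2 := by ring
    have h24 : 0 ≤ (x - yhat) * Real.sqrt n := mul_nonneg hxy0 (Real.sqrt_nonneg _)
    have hts : (x - yhat) * Real.sqrt n ≤ 2 * ((j:ℝ) + 2) := by
      have hv : (0:ℝ) ≤ 2 * ((j:ℝ) + 2) := by positivity
      exact (pow_le_pow_iff_left₀ h24 hv two_ne_zero).mp h23
    have hSc : 2 * ((j:ℝ) + 2) ≤ S := by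
      have h25 : (1:ℝ) ≤ Real.sqrt ((j:ℝ) + 2) := by
        rw [show (1:ℝ) = Real.sqrt 1 by rw [Real.sqrt_one]]
        exact Real.sqrt_le_sqrt (by linarith [Nat.cast_nonneg (α := ℝ) j])
      have := mul_le_mul_of_nonneg_left h25
        (show (0:ℝ) ≤ 2 * ((j:ℝ) + 2) by positivity)
      rw [hS_def]; linarith only [this]
    linarith only [hts, hSc]
end

section
/- For each j with 0 ≤ j ≤ d, the function F_j(x) = y^{-j} ∑_{r=j}^{d} q^{r-j} C(r,j) (1 - y^{-1})^{r-j} i_r, where x = (a, i_0, ..., i_d), y = (a + ∑_{r=0}^d r i_r)^{1/2} (assuming this is positive), is a first integral of the ODE system a' = -2a/(a+i) + p∑_r (r i_r/(a+i))(r-2) - q∑_r r i_r/(a+i), i_j' = (q(j+1)i_{j+1} - j i_j)/(a+i): along any solution x(τ) with a(τ)+i(τ) > 0, F_j(x(τ)) is constant. -/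
private theorem stmt_17_aux1 (d : ℕ) (p q : ℝ) (hpq : p + q = 1)
    (T : ℝ) (a : ℝ → ℝ) (ii : ℕ → ℝ → ℝ)
    (hiend : ∀ τ, ii (d + 1) τ = 0)
    (hpos : ∀ τ ∈ Set.Icc (0 : ℝ) T,
      0 < a τ + ∑ r ∈ Finset.range (d + 1), (r : ℝ) * ii r τ)
    (ha : ∀ τ ∈ Set.Icc (0 : ℝ) T,
      HasDerivAt a
        ((a τ / (a τ + ∑ r ∈ Finset.range (d + 1), (r : ℝ) * ii r τ)) * (-2)
          + p * ∑ r ∈ Finset.range (d + 1),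
              ((r : ℝ) * ii r τ / (a τ + ∑ s ∈ Finset.range (d + 1), (s : ℝ) * ii s τ))
                * ((r : ℝ) - 2)
          + q * ∑ r ∈ Finset.range (d + 1),
              ((r : ℝ) * ii r τ / (a τ + ∑ s ∈ Finset.range (d + 1), (s : ℝ) * ii s τ))
                * (-1)) τ)
    (hi : ∀ j ≤ d, ∀ τ ∈ Set.Icc (0 : ℝ) T,
      HasDerivAt (ii j)
        ((q * ((j : ℝ) + 1) * ii (j + 1) τ - (j : ℝ) * ii j τ)
          / (a τ + ∑ r ∈ Finset.range (d + 1), (r : ℝ) * ii r τ)) τ) :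
    ∀ τ ∈ Set.Icc (0 : ℝ) T,
      HasDerivAt (fun t => a t + ∑ r ∈ Finset.range (d + 1), (r : ℝ) * ii r t) (-2) τ := by
  intro τ hτ
  have hp' : p = 1 - q := by linarith
  subst hp'
  set s : ℝ := a τ + ∑ r ∈ Finset.range (d + 1), (r : ℝ) * ii r τ with hs
  have hs0 : s ≠ 0 := (hpos τ hτ).ne'
  have hsum : HasDerivAt (fun t => ∑ r ∈ Finset.range (d + 1), (r : ℝ) * ii r t)
      (∑ r ∈ Finset.range (d + 1),
        (r : ℝ) * ((q * ((r : ℝ) + 1) * ii (r + 1) τ - (r : ℝ) * ii r τ) / s)) τ := by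
    exact HasDerivAt.fun_sum fun r hr =>
      ((hi r (Nat.lt_succ_iff.mp (Finset.mem_range.mp hr)) τ hτ).const_mul _)
  have h := (ha τ hτ).add hsum
  refine h.congr_deriv (Eq.symm ?_)
  -- show -2 = big expression
  have shift : ∑ r ∈ Finset.range (d + 1), (r : ℝ) * (q * ((r : ℝ) + 1) * ii (r + 1) τ)
      = ∑ r ∈ Finset.range (d + 1), ((r : ℝ) - 1) * (q * (r : ℝ) * ii r τ) := by
    have h2 := Finset.sum_range_succ' (fun k => ((k : ℝ) - 1) * (q * (k : ℝ) * ii k τ)) (d + 1)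
    have h3 := Finset.sum_range_succ (fun k => ((k : ℝ) - 1) * (q * (k : ℝ) * ii k τ)) (d + 1)
    simp only [Nat.cast_zero, mul_zero, zero_mul, add_zero] at h2
    simp only [hiend, mul_zero, add_zero] at h3
    have h4 : ∑ r ∈ Finset.range (d + 1), (r : ℝ) * (q * ((r : ℝ) + 1) * ii (r + 1) τ)
        = ∑ r ∈ Finset.range (d + 1),
            (((r + 1 : ℕ) : ℝ) - 1) * (q * ((r + 1 : ℕ) : ℝ) * ii (r + 1) τ) :=
      Finset.sum_congr rfl (by intros; push_cast; ring)
    rw [h4, ← h2, h3]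
  have e1 : ∑ r ∈ Finset.range (d + 1), ((r : ℝ) * ii r τ / s) * ((r : ℝ) - 2)
      = (∑ r ∈ Finset.range (d + 1), (r : ℝ) * ii r τ * ((r : ℝ) - 2)) / s := by
    rw [Finset.sum_div]; exact Finset.sum_congr rfl (by intros; ring)
  have e2 : ∑ r ∈ Finset.range (d + 1), ((r : ℝ) * ii r τ / s) * (-1)
      = (∑ r ∈ Finset.range (d + 1), (r : ℝ) * ii r τ * (-1)) / s := by
    rw [Finset.sum_div]; exact Finset.sum_congr rfl (by intros; ring)
  have e3 : ∑ r ∈ Finset.range (d + 1),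
        (r : ℝ) * ((q * ((r : ℝ) + 1) * ii (r + 1) τ - (r : ℝ) * ii r τ) / s)
      = ((∑ r ∈ Finset.range (d + 1), (r : ℝ) * (q * ((r : ℝ) + 1) * ii (r + 1) τ))
        - ∑ r ∈ Finset.range (d + 1), (r : ℝ) * ((r : ℝ) * ii r τ)) / s := by
    rw [← Finset.sum_sub_distrib, Finset.sum_div]
    exact Finset.sum_congr rfl (by intros; ring)
  have comb : (1 - q) * (∑ r ∈ Finset.range (d + 1), (r : ℝ) * ii r τ * ((r : ℝ) - 2))
      + q * (∑ r ∈ Finset.range (d + 1), (r : ℝ) * ii r τ * (-1))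
      + ((∑ r ∈ Finset.range (d + 1), ((r : ℝ) - 1) * (q * (r : ℝ) * ii r τ))
        - ∑ r ∈ Finset.range (d + 1), (r : ℝ) * ((r : ℝ) * ii r τ))
      = -2 * ∑ r ∈ Finset.range (d + 1), (r : ℝ) * ii r τ := by
    rw [Finset.mul_sum, Finset.mul_sum, Finset.mul_sum, ← Finset.sum_sub_distrib,
      ← Finset.sum_add_distrib, ← Finset.sum_add_distrib]
    exact Finset.sum_congr rfl (by intros; ring)
  rw [e1, e2, e3, shift, ← hs]
  set A := ∑ r ∈ Finset.range (d + 1), (r : ℝ) * ii r τ * ((r : ℝ) - 2) with hA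
  set B := ∑ r ∈ Finset.range (d + 1), (r : ℝ) * ii r τ * (-1) with hB
  set C := ∑ r ∈ Finset.range (d + 1), ((r : ℝ) - 1) * (q * (r : ℝ) * ii r τ) with hC
  set D := ∑ r ∈ Finset.range (d + 1), (r : ℝ) * ((r : ℝ) * ii r τ) with hD
  have expand : a τ / s * (-2) + (1 - q) * (A / s) + q * (B / s) + (C - D) / s
      = (a τ * (-2) + ((1 - q) * A + q * B + (C - D))) / s := by
    ring
  have num : a τ * (-2) + ((1 - q) * A + q * B + (C - D)) = -2 * s := by
    rw [hs]; linarith [comb]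
  rw [expand, num]
  field_simp


private theorem stmt_17_aux2 (d : ℕ) (q T : ℝ) (a : ℝ → ℝ) (ii : ℕ → ℝ → ℝ)
    (hiend : ∀ τ, ii (d + 1) τ = 0)
    (hpos : ∀ τ ∈ Set.Icc (0 : ℝ) T,
      0 < a τ + ∑ r ∈ Finset.range (d + 1), (r : ℝ) * ii r τ)
    (hi : ∀ j ≤ d, ∀ τ ∈ Set.Icc (0 : ℝ) T,
      HasDerivAt (ii j)
        ((q * ((j : ℝ) + 1) * ii (j + 1) τ - (j : ℝ) * ii j τ)
          / (a τ + ∑ r ∈ Finset.range (d + 1), (r : ℝ) * ii r τ)) τ)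
    (hS : ∀ τ ∈ Set.Icc (0 : ℝ) T,
      HasDerivAt (fun t => a t + ∑ r ∈ Finset.range (d + 1), (r : ℝ) * ii r t) (-2) τ)
    (j : ℕ) (hj : j ≤ d) :
    ∀ τ ∈ Set.Icc (0 : ℝ) T,
      HasDerivAt (fun t =>
        (Real.sqrt (a t + ∑ r ∈ Finset.range (d + 1), (r : ℝ) * ii r t))⁻¹ ^ j *
          ∑ r ∈ Finset.Icc j d,
            q ^ (r - j) * (Nat.choose r j : ℝ) *
              (1 - (Real.sqrt (a t + ∑ s ∈ Finset.range (d + 1), (s : ℝ) * ii s t))⁻¹)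
                ^ (r - j) * ii r t) 0 τ := by
  intro τ hτ
  have hs : 0 < a τ + ∑ r ∈ Finset.range (d + 1), (r : ℝ) * ii r τ := hpos τ hτ
  set s : ℝ := a τ + ∑ r ∈ Finset.range (d + 1), (r : ℝ) * ii r τ with hsdef
  set x : ℝ := Real.sqrt s with hxdef
  have hx : 0 < x := Real.sqrt_pos.mpr hs
  set u : ℝ := x⁻¹ with hudef
  have hx2 : x ^ 2 = s := Real.sq_sqrt hs.le
  have hu2 : u ^ 2 = s⁻¹ := by rw [hudef, ← hx2, inv_pow]
  set w : ℝ := 1 - u with hwdef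
  -- derivative of the inverse sqrt
  have hsqrt : HasDerivAt
      (fun t => Real.sqrt (a t + ∑ r ∈ Finset.range (d + 1), (r : ℝ) * ii r t))
      (1 / (2 * x) * (-2)) τ := (Real.hasDerivAt_sqrt hs.ne').comp τ (hS τ hτ)
  have hv : HasDerivAt
      (fun t => (Real.sqrt (a t + ∑ r ∈ Finset.range (d + 1), (r : ℝ) * ii r t))⁻¹)
      (u ^ 3) τ := by
    have h := hsqrt.inv hx.ne'
    refine h.congr_deriv (Eq.symm ?_)
    rw [← hsdef, ← hxdef, hudef]
    field_simp
  -- derivative of each summand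
  have hterm : ∀ r ∈ Finset.Icc j d, HasDerivAt
      (fun t => q ^ (r - j) * (Nat.choose r j : ℝ) *
        (1 - (Real.sqrt (a t + ∑ s ∈ Finset.range (d + 1), (s : ℝ) * ii s t))⁻¹) ^ (r - j)
        * ii r t)
      (q ^ (r - j) * (Nat.choose r j : ℝ) *
        ((((r : ℝ) - j) * w ^ (r - j - 1) * (-(u ^ 3)) * ii r τ)
          + w ^ (r - j) * (u ^ 2 * (q * ((r : ℝ) + 1) * ii (r + 1) τ - (r : ℝ) * ii r τ))))
      τ := by
    intro r hr
    obtain ⟨hjr, hrd⟩ := Finset.mem_Icc.mp hr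
    have h1 : HasDerivAt
        (fun t => (1 - (Real.sqrt (a t + ∑ s ∈ Finset.range (d + 1), (s : ℝ) * ii s t))⁻¹)
          ^ (r - j))
        (((r - j : ℕ) : ℝ) * w ^ (r - j - 1) * (0 - u ^ 3)) τ :=
      ((hasDerivAt_const τ (1 : ℝ)).sub hv).pow _
    have h2 := hi r hrd τ hτ
    have h3 := (h1.const_mul (q ^ (r - j) * (Nat.choose r j : ℝ))).mul h2
    refine h3.congr_deriv (Eq.symm ?_)
    rw [Nat.cast_sub hjr, ← hsdef]
    rw [div_eq_mul_inv, ← hu2]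
    ring
  have hG := HasDerivAt.fun_sum hterm
  have hvj := hv.pow j
  have hfull := hvj.mul hG
  have hzero : (↑j * ((Real.sqrt (a τ + ∑ r ∈ Finset.range (d + 1), (r : ℝ) * ii r τ))⁻¹)
        ^ (j - 1) * u ^ 3) *
      (∑ r ∈ Finset.Icc j d,
        q ^ (r - j) * (Nat.choose r j : ℝ) *
          (1 - (Real.sqrt (a τ + ∑ s ∈ Finset.range (d + 1), (s : ℝ) * ii s τ))⁻¹) ^ (r - j)
          * ii r τ)
      + ((Real.sqrt (a τ + ∑ r ∈ Finset.range (d + 1), (r : ℝ) * ii r τ))⁻¹) ^ j *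
        (∑ r ∈ Finset.Icc j d,
          q ^ (r - j) * (Nat.choose r j : ℝ) *
            ((((r : ℝ) - j) * w ^ (r - j - 1) * (-(u ^ 3)) * ii r τ)
              + w ^ (r - j) * (u ^ 2 * (q * ((r : ℝ) + 1) * ii (r + 1) τ - (r : ℝ) * ii r τ))))
      = 0 := by
    rw [← hsdef, ← hxdef, ← hudef, ← hwdef]
    have key : ∑ r ∈ Finset.Icc j d,
          q ^ (r - j) * (Nat.choose r j : ℝ) * w ^ (r - j) * (q * ((r : ℝ) + 1) * ii (r + 1) τ)
        = ∑ r ∈ Finset.Icc j d,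
          q ^ (r - j) * (Nat.choose r j : ℝ) * (((r : ℝ) - j) * w ^ (r - j - 1)) * ii r τ := by
      have hstep1 : ∑ r ∈ Finset.Icc j d,
            q ^ (r - j) * (Nat.choose r j : ℝ) * w ^ (r - j) * (q * ((r : ℝ) + 1) * ii (r + 1) τ)
          = ∑ r ∈ Finset.Icc j d,
            q ^ ((r + 1) - j) * (Nat.choose (r + 1) j : ℝ)
              * ((((r + 1 : ℕ) : ℝ) - j) * w ^ ((r + 1) - j - 1)) * ii (r + 1) τ := by
        refine Finset.sum_congr rfl ?_
        intro r hr
        obtain ⟨hjr, hrd⟩ := Finset.mem_Icc.mp hr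
        have hc : ((Nat.choose r j : ℕ) : ℝ) * ((r : ℝ) + 1)
            = ((Nat.choose (r + 1) j : ℕ) : ℝ) * (((r : ℝ) + 1) - j) := by
          have h0 := Nat.choose_mul_succ_eq r j
          have h1 := congrArg (fun n : ℕ => (n : ℝ)) h0
          push_cast [Nat.cast_sub (Nat.le_succ_of_le hjr)] at h1
          linarith
        have he1 : (r + 1) - j = (r - j) + 1 := by omega
        rw [he1, Nat.add_sub_cancel, pow_succ]
        push_cast
        linear_combination (q ^ (r - j) * w ^ (r - j) * ii (r + 1) τ * q) * hc
      have hstep2 : ∑ r ∈ Finset.Icc j d,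
            q ^ ((r + 1) - j) * (Nat.choose (r + 1) j : ℝ)
              * ((((r + 1 : ℕ) : ℝ) - j) * w ^ ((r + 1) - j - 1)) * ii (r + 1) τ
          = ∑ r ∈ Finset.Icc (j + 1) (d + 1),
            q ^ (r - j) * (Nat.choose r j : ℝ) * (((r : ℝ) - j) * w ^ (r - j - 1)) * ii r τ := by
        rw [← Finset.map_add_right_Icc, Finset.sum_map]
        simp [addRightEmbedding_apply]
      rw [hstep1, hstep2, Finset.sum_Icc_succ_top (by omega : j + 1 ≤ d + 1)]
      rw [Finset.Icc_eq_cons_Ioc hj, Finset.sum_cons, ← Finset.Icc_add_one_left_eq_Ioc]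
      have hlast : q ^ (d + 1 - j) * (Nat.choose (d + 1) j : ℝ)
          * ((((d + 1 : ℕ) : ℝ) - j) * w ^ (d + 1 - j - 1)) * ii (d + 1) τ = 0 := by
        rw [hiend]; ring
      have hfirst : q ^ (j - j) * (Nat.choose j j : ℝ)
          * (((j : ℝ) - j) * w ^ (j - j - 1)) * ii j τ = 0 := by
        ring_nf
      rw [hlast, hfirst]
      push_cast
      ring
    have hjpow : (j : ℝ) * u ^ (j - 1) * u ^ 3 = u ^ j * ((j : ℝ) * u ^ 2) := by
      cases j with
      | zero => simp
      | succ k => rw [Nat.succ_sub_one]; push_cast; ring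
    rw [hjpow]
    suffices h : (j : ℝ) * u ^ 2 *
          (∑ r ∈ Finset.Icc j d,
            q ^ (r - j) * (Nat.choose r j : ℝ) * w ^ (r - j) * ii r τ)
        + (∑ r ∈ Finset.Icc j d,
            q ^ (r - j) * (Nat.choose r j : ℝ) *
              ((((r : ℝ) - j) * w ^ (r - j - 1) * (-(u ^ 3)) * ii r τ)
                + w ^ (r - j) * (u ^ 2 * (q * ((r : ℝ) + 1) * ii (r + 1) τ - (r : ℝ) * ii r τ))))
        = 0 by
      linear_combination (u ^ j) * h
    have hsplit : (j : ℝ) * u ^ 2 *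
          (∑ r ∈ Finset.Icc j d,
            q ^ (r - j) * (Nat.choose r j : ℝ) * w ^ (r - j) * ii r τ)
        + (∑ r ∈ Finset.Icc j d,
            q ^ (r - j) * (Nat.choose r j : ℝ) *
              ((((r : ℝ) - j) * w ^ (r - j - 1) * (-(u ^ 3)) * ii r τ)
                + w ^ (r - j) * (u ^ 2 * (q * ((r : ℝ) + 1) * ii (r + 1) τ - (r : ℝ) * ii r τ))))
        = (∑ r ∈ Finset.Icc j d,
            q ^ (r - j) * (Nat.choose r j : ℝ) *
              ((j : ℝ) * u ^ 2 * w ^ (r - j) * ii r τ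
                - ((r : ℝ) - j) * w ^ (r - j - 1) * u ^ 3 * ii r τ
                - (r : ℝ) * u ^ 2 * w ^ (r - j) * ii r τ))
          + u ^ 2 * ∑ r ∈ Finset.Icc j d,
              q ^ (r - j) * (Nat.choose r j : ℝ) * w ^ (r - j)
                * (q * ((r : ℝ) + 1) * ii (r + 1) τ) := by
      rw [Finset.mul_sum, Finset.mul_sum, ← Finset.sum_add_distrib, ← Finset.sum_add_distrib]
      exact Finset.sum_congr rfl (by intros; ring)
    rw [hsplit, key, Finset.mul_sum, ← Finset.sum_add_distrib]
    rw [Finset.sum_congr rfl (fun r hr => ?_), Finset.sum_const_zero]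
    obtain ⟨hjr, hrd⟩ := Finset.mem_Icc.mp hr
    show q ^ (r - j) * (Nat.choose r j : ℝ) *
          ((j : ℝ) * u ^ 2 * w ^ (r - j) * ii r τ
            - ((r : ℝ) - j) * w ^ (r - j - 1) * u ^ 3 * ii r τ
            - (r : ℝ) * u ^ 2 * w ^ (r - j) * ii r τ)
        + u ^ 2 * (q ^ (r - j) * (Nat.choose r j : ℝ)
            * (((r : ℝ) - j) * w ^ (r - j - 1)) * ii r τ) = (0 : ℝ)
    obtain rfl | hlt := hjr.eq_or_lt
    · simp only [Nat.sub_self, pow_zero]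
      ring
    · obtain ⟨k, rfl⟩ : ∃ k, r = j + (k + 1) := ⟨r - j - 1, by omega⟩
      have e1 : j + (k + 1) - j = k + 1 := by omega
      rw [e1, Nat.add_sub_cancel, hwdef]
      push_cast
      ring
  exact hfull.congr_deriv hzero

theorem stmt_17 (d : ℕ) (hd : 3 ≤ d) (p q : ℝ) (hp : 0 < p) (hp1 : p < 1)
    (hpq : p + q = 1)
    (T : ℝ) (hT : 0 < T) (a : ℝ → ℝ) (ii : ℕ → ℝ → ℝ)
    (hiend : ∀ τ, ii (d + 1) τ = 0)
    (hpos : ∀ τ ∈ Set.Icc (0 : ℝ) T,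
      0 < a τ + ∑ r ∈ Finset.range (d + 1), (r : ℝ) * ii r τ)
    (ha : ∀ τ ∈ Set.Icc (0 : ℝ) T,
      HasDerivAt a
        ((a τ / (a τ + ∑ r ∈ Finset.range (d + 1), (r : ℝ) * ii r τ)) * (-2)
          + p * ∑ r ∈ Finset.range (d + 1),
              ((r : ℝ) * ii r τ / (a τ + ∑ s ∈ Finset.range (d + 1), (s : ℝ) * ii s τ))
                * ((r : ℝ) - 2)
          + q * ∑ r ∈ Finset.range (d + 1),
              ((r : ℝ) * ii r τ / (a τ + ∑ s ∈ Finset.range (d + 1), (s : ℝ) * ii s τ))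
                * (-1)) τ)
    (hi : ∀ j ≤ d, ∀ τ ∈ Set.Icc (0 : ℝ) T,
      HasDerivAt (ii j)
        ((q * ((j : ℝ) + 1) * ii (j + 1) τ - (j : ℝ) * ii j τ)
          / (a τ + ∑ r ∈ Finset.range (d + 1), (r : ℝ) * ii r τ)) τ)
    (F : ℕ → ℝ → ℝ)
    (hF : ∀ j τ, F j τ =
      (Real.sqrt (a τ + ∑ r ∈ Finset.range (d + 1), (r : ℝ) * ii r τ))⁻¹ ^ j *
        ∑ r ∈ Finset.Icc j d,
          q ^ (r - j) * (Nat.choose r j) *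
            (1 - (Real.sqrt (a τ + ∑ s ∈ Finset.range (d + 1), (s : ℝ) * ii s τ))⁻¹)
              ^ (r - j) * ii r τ) :
    ∀ j ≤ d, ∀ τ₁ ∈ Set.Icc (0 : ℝ) T, ∀ τ₂ ∈ Set.Icc (0 : ℝ) T,
      F j τ₁ = F j τ₂ := by
  intro j hj τ₁ hτ₁ τ₂ hτ₂
  have hS := stmt_17_aux1 d p q hpq T a ii hiend hpos ha hi
  have hder : ∀ τ ∈ Set.Icc (0 : ℝ) T, HasDerivAt (F j) 0 τ := by
    intro τ hτ
    have h2 := stmt_17_aux2 d q T a ii hiend hpos hi hS j hj τ hτ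
    have hFe : F j = fun t =>
        (Real.sqrt (a t + ∑ r ∈ Finset.range (d + 1), (r : ℝ) * ii r t))⁻¹ ^ j *
          ∑ r ∈ Finset.Icc j d,
            q ^ (r - j) * (Nat.choose r j : ℝ) *
              (1 - (Real.sqrt (a t + ∑ s ∈ Finset.range (d + 1), (s : ℝ) * ii s t))⁻¹)
                ^ (r - j) * ii r t := funext (hF j)
    rw [hFe]
    exact h2
  have hcont : ContinuousOn (F j) (Set.Icc (0 : ℝ) T) :=
    fun τ hτ => (hder τ hτ).continuousAt.continuousWithinAt
  have hconst := constant_of_has_deriv_right_zero hcont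
    (fun τ hτ => (hder τ (Set.Ico_subset_Icc_self hτ)).hasDerivWithinAt)
  rw [hconst τ₁ hτ₁, hconst τ₂ hτ₂]
end

section
/- Let d ≥ 3, p ∈ (0,1), q = 1-p, π ∈ (0,1) the root of π = (pπ+q)^{d-1} when p > 1/(d-1). Then as p ↓ p* = 1/(d-1), the quantity α(p) = 1 - (pπ + q)^d satisfies α(p) ≍ p - p*: there exist constants c_1, c_2 > 0 depending only on d and ε > 0 such that c_1 (p-p*) ≤ α(p) ≤ c_2 (p-p*) for all 0 < p - p* < ε. -/
theorem stmt_19 (d : ℕ) (hd : 3 ≤ d) :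
    ∃ c₁ c₂ ε : ℝ, 0 < c₁ ∧ 0 < c₂ ∧ 0 < ε ∧
      ∀ p : ℝ, 1 / ((d : ℝ) - 1) < p → p - 1 / ((d : ℝ) - 1) < ε → p < 1 →
        ∀ x : ℝ, x ∈ Set.Ioo (0 : ℝ) 1 → x = (p * x + (1 - p)) ^ (d - 1) →
          c₁ * (p - 1 / ((d : ℝ) - 1)) ≤ 1 - (p * x + (1 - p)) ^ d ∧
          1 - (p * x + (1 - p)) ^ d ≤ c₂ * (p - 1 / ((d : ℝ) - 1)) := by
  have hd3 : (3:ℝ) ≤ (d:ℝ) := by exact_mod_cast hd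
  refine ⟨1/((d:ℝ)-1), (d:ℝ) * ((d:ℝ)-1)^2, 1,
    by apply div_pos one_pos; linarith,
    mul_pos (by linarith) (pow_pos (by linarith) 2), one_pos, ?_⟩
  intro p hp hpe hp1 x hx hfix
  obtain ⟨hx0, hx1⟩ := hx
  obtain ⟨D, hDdef⟩ : ∃ D : ℝ, D = (d:ℝ) - 1 := ⟨_, rfl⟩
  rw [← hDdef] at hp hpe ⊢
  have hD2 : (2:ℝ) ≤ D := by rw [hDdef]; linarith
  have hDpos : (0:ℝ) < D := by linarith
  have hp0 : 0 < p := lt_trans (by positivity) hp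
  obtain ⟨y, hy⟩ : ∃ y : ℝ, y = p * x + (1 - p) := ⟨_, rfl⟩
  rw [← hy] at hfix ⊢
  have hy0 : 0 < y := by nlinarith [mul_pos hp0 hx0]
  have hy1 : y < 1 := by nlinarith [mul_lt_mul_of_pos_left hx1 hp0]
  obtain ⟨S, hS⟩ : ∃ S : ℝ, S = ∑ k ∈ Finset.range (d-1), y ^ k := ⟨_, rfl⟩
  have hgeom : (1 - y) * S = 1 - y ^ (d-1) := by
    have h := geom_sum_mul y (d-1)
    rw [hS]; linarith [h]
  have hPS : p * S = 1 := by
    have h1 : 1 - y = p * (1 - x) := by rw [hy]; ring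
    rw [hfix, ← hgeom] at h1
    have hne : (1 - y) ≠ 0 := by linarith
    have h2 : (1 - y) * 1 = (1 - y) * (p * S) := by linarith [h1]
    have := mul_left_cancel₀ hne h2
    linarith
  have hcast : ((d-1 : ℕ) : ℝ) = D := by
    rw [hDdef]; push_cast [Nat.cast_sub (by omega : 1 ≤ d)]; ring
  have hpowle : ∀ k : ℕ, y ^ k ≤ 1 := fun k => pow_le_one₀ hy0.le hy1.le
  have hpownn : ∀ k : ℕ, 0 ≤ y ^ k := fun k => pow_nonneg hy0.le k
  have hS1 : 1 ≤ S := by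
    have := Finset.single_le_sum (f := fun k => y ^ k)
      (fun i _ => hpownn i) (Finset.mem_range.mpr (by omega : 0 < d - 1))
    rw [hS]; simpa using this
  have hSD : S ≤ D := by
    have := Finset.sum_le_card_nsmul (Finset.range (d-1)) (fun k => y ^ k) 1
      (fun i _ => hpowle i)
    rw [hS]; simpa [hcast] using this
  have hNsum : D - S = ∑ k ∈ Finset.range (d-1), (1 - y ^ k) := by
    rw [hS, Finset.sum_sub_distrib, Finset.sum_const]
    simp [hcast]
  have hNge : 1 - y ≤ D - S := by
    rw [hNsum]
    have := Finset.single_le_sum (f := fun k => 1 - y ^ k)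
      (fun i _ => by show (0:ℝ) ≤ 1 - y ^ i; linarith [hpowle i])
      (Finset.mem_range.mpr (by omega : 1 < d - 1))
    simpa using this
  have hNle : D - S ≤ D^2 * (1 - y) := by
    rw [hNsum]
    have hb : ∀ i ∈ Finset.range (d-1), 1 - y ^ i ≤ D * (1 - y) := by
      intro i hi
      have hber : 1 + (i:ℝ) * (y - 1) ≤ (1 + (y - 1)) ^ i :=
        one_add_mul_le_pow (by linarith) i
      have hiD : (i:ℝ) ≤ D := by
        have h' : (i:ℝ) ≤ ((d-1:ℕ):ℝ) := by
          exact_mod_cast Nat.le_of_lt (Finset.mem_range.mp hi)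
        linarith [hcast ▸ h']
      have := mul_le_mul_of_nonneg_right hiD (by linarith : (0:ℝ) ≤ 1 - y)
      simp only [add_sub_cancel] at hber
      nlinarith
    have hsum := Finset.sum_le_card_nsmul (Finset.range (d-1)) _ _ hb
    have h2 : ((Finset.range (d-1)).card : ℝ) = D := by simp [hcast]
    calc ∑ k ∈ Finset.range (d-1), (1 - y ^ k)
        ≤ (Finset.range (d-1)).card • (D * (1 - y)) := hsum
      _ = D^2 * (1-y) := by rw [nsmul_eq_mul, h2]; ring
  have hid : (p - 1/D) * (D * S) = D - S := by
    field_simp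
    nlinarith [hPS]
  have hpm : 0 < p - 1/D := by linarith
  have hAlow : 1 - y ≤ 1 - y ^ d := by
    have : y ^ d ≤ y := by
      calc y ^ d ≤ y ^ 1 := pow_le_pow_of_le_one hy0.le hy1.le (by omega)
      _ = y := pow_one y
    linarith
  have hAhigh : 1 - y ^ d ≤ (d:ℝ) * (1 - y) := by
    have hber : 1 + (d:ℝ) * (y - 1) ≤ (1 + (y - 1)) ^ d :=
      one_add_mul_le_pow (by linarith) d
    simp only [add_sub_cancel] at hber
    linarith
  constructor
  · -- lower bound
    have hDS : D ≤ D * S := le_mul_of_one_le_right hDpos.le hS1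
    have h1 : (p - 1/D) * D ≤ D - S := by
      rw [← hid]; exact mul_le_mul_of_nonneg_left hDS hpm.le
    have h2 : (p - 1/D) * D ≤ D^2 * (1 - y) := h1.trans hNle
    have h2' : (p - 1/D) * D ≤ (D * (1 - y)) * D := h2.trans_eq (by ring)
    have h3 : p - 1/D ≤ D * (1 - y) := le_of_mul_le_mul_right h2' hDpos
    have h5 : D * (1 - y) ≤ D * (1 - y ^ d) := mul_le_mul_of_nonneg_left hAlow hDpos.le
    rw [div_mul_eq_mul_div, div_le_iff₀ hDpos]
    linarith [h3, h5]
  · -- upper bound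
    have h1 : 1 - y ≤ (p - 1/D) * (D * D) := by
      calc 1 - y ≤ D - S := hNge
      _ = (p - 1/D) * (D * S) := hid.symm
      _ ≤ (p - 1/D) * (D * D) :=
        mul_le_mul_of_nonneg_left (mul_le_mul_of_nonneg_left hSD hDpos.le) hpm.le
    have h2 : (d:ℝ) * (1 - y) ≤ (d:ℝ) * ((p - 1/D) * (D * D)) :=
      mul_le_mul_of_nonneg_left h1 (by positivity)
    calc 1 - y ^ d ≤ (d:ℝ) * (1 - y) := hAhigh
    _ ≤ (d:ℝ) * ((p - 1/D) * (D * D)) := h2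
    _ = (d:ℝ) * D^2 * (p - 1/D) := by ring
end
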